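/- For every PL subsumption instance with oracle (K, O, q), letting K_O^- be the set of range and functionality axioms of K and O_K^+ = O ∪ (K \ K_O^-), we have: K ∪ O ⊨ q if and only if K_O^- ∪ pos(O_K^+) ⊨ q. -/

import Mathlib

/-! Core formalization of the policy logic `PL` of Bonatti et al.,
    "Machine Understandable Policies and GDPR Compliance Checking". -/

namespace PLPaper

/-- Simple `PL` concepts: `C ::= A | ⊥ | ∃f.[l,u] | ∃R.C | C ⊓ C`. -/
inductive SPL : Type
  | atom  : ℕ → SPL
  | bot   : SPL
  | ival  : ℕ → ℤ → ℤ → SPL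
  | ex    : ℕ → SPL → SPL
  | inter : SPL → SPL → SPL
  deriving DecidableEq

/-- A full `PL` concept: a union `C₁ ⊔ … ⊔ Cₙ` of simple concepts, given as a list. -/
abbrev PLC := List SPL

/-- Axioms of a `PL` knowledge base. -/
inductive PLAx : Type
  | funcRole : ℕ → PLAx              -- func(R), R a role name
  | funcProp : ℕ → PLAx              -- func(f), f a concrete property
  | rangeAx  : ℕ → ℕ → PLAx          -- range(R, A)
  | incl     : ℕ → ℕ → PLAx          -- A ⊑ B
  | disj     : ℕ → ℕ → PLAx          -- disj(A, B)
  deriving DecidableEq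

/-- A description-logic interpretation (concept names, role names, concrete properties). -/
structure Interp : Type 1 where
  Δ : Type
  nonempty : Nonempty Δ
  conc : ℕ → Set Δ
  role : ℕ → Set (Δ × Δ)
  cprop : ℕ → Set (Δ × ℤ)

/-- Semantics of simple `PL` concepts. -/
def SPL.sem (I : Interp) : SPL → Set I.Δ
  | .atom a => I.conc a
  | .bot => ∅
  | .ival f l u => {d | ∃ i : ℤ, l ≤ i ∧ i ≤ u ∧ (d, i) ∈ I.cprop f}
  | .ex r c => {d | ∃ e, (d, e) ∈ I.role r ∧ e ∈ c.sem I}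
  | .inter c d => c.sem I ∩ d.sem I

/-- Semantics of full `PL` concepts (finite unions). -/
def semL (I : Interp) (C : PLC) : Set I.Δ := {d | ∃ c ∈ C, d ∈ c.sem I}

/-- Satisfaction of a `PL` axiom. -/
def Interp.satAx (I : Interp) : PLAx → Prop
  | .funcRole r => ∀ ⦃d e e'⦄, (d, e) ∈ I.role r → (d, e') ∈ I.role r → e = e'
  | .funcProp f => ∀ ⦃d i j⦄, (d, i) ∈ I.cprop f → (d, j) ∈ I.cprop f → i = j
  | .rangeAx r a => ∀ ⦃d e⦄, (d, e) ∈ I.role r → e ∈ I.conc a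
  | .incl a b => I.conc a ⊆ I.conc b
  | .disj a b => I.conc a ∩ I.conc b = ∅

def Interp.satKB (I : Interp) (K : Set PLAx) : Prop := ∀ ax ∈ K, I.satAx ax

/-- `K ⊨ C ⊑ D` for full `PL` concepts. -/
def Entails (K : Set PLAx) (C D : PLC) : Prop :=
  ∀ I : Interp, I.satKB K → semL I C ⊆ semL I D

/-- The multiset of conjuncts of a simple concept (intersections treated as sets:
    ordering and parenthesization of conjuncts is irrelevant). -/
def SPL.conj : SPL → Multiset SPL
  | .inter c d => c.conj + d.conj
  | c => {c}

/-- `⊑*`: the reflexive–transitive closure of the atomic inclusions of `K`. -/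
def SubStar (K : Set PLAx) : ℕ → ℕ → Prop :=
  Relation.ReflTransGen fun a b => PLAx.incl a b ∈ K

/-- One application of one of the seven normalization rules w.r.t. `K` (Table 3);
    intersections are treated as sets of conjuncts, and rules may be applied to
    subconcepts (congruence). -/
inductive Rw (K : Set PLAx) : SPL → SPL → Prop
  /-- rule 1: `⊥ ⊓ D ⇝ ⊥` -/
  | botConj (C : SPL) :
      SPL.bot ∈ C.conj → C ≠ SPL.bot → Rw K C SPL.bot
  /-- rule 2: `∃R.⊥ ⇝ ⊥` -/
  | exBot (r : ℕ) : Rw K (SPL.ex r SPL.bot) SPL.bot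
  /-- rule 3: `∃f.[l,u] ⇝ ⊥` if `l > u` -/
  | emptyIval (f : ℕ) (l u : ℤ) : u < l → Rw K (SPL.ival f l u) SPL.bot
  /-- rule 4: merge existential restrictions over a functional role -/
  | funcRole (C C' : SPL) (r : ℕ) (D D' : SPL) (rest : Multiset SPL) :
      PLAx.funcRole r ∈ K →
      C.conj = {SPL.ex r D, SPL.ex r D'} + rest →
      C'.conj = {SPL.ex r (SPL.inter D D')} + rest →
      Rw K C C'
  /-- rule 5: merge interval constraints over a functional concrete property -/
  | funcProp (C C' : SPL) (f : ℕ) (l₁ u₁ l₂ u₂ : ℤ) (rest : Multiset SPL) :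
      PLAx.funcProp f ∈ K →
      C.conj = {SPL.ival f l₁ u₁, SPL.ival f l₂ u₂} + rest →
      C'.conj = {SPL.ival f (max l₁ l₂) (min u₁ u₂)} + rest →
      Rw K C C'
  /-- rule 6: add range information -/
  | rangeRule (C C' : SPL) (r a : ℕ) (D : SPL) (rest : Multiset SPL) :
      PLAx.rangeAx r a ∈ K →
      SPL.atom a ∉ D.conj → SPL.bot ∉ D.conj →
      C.conj = {SPL.ex r D} + rest →
      C'.conj = {SPL.ex r (SPL.inter D (SPL.atom a))} + rest →
      Rw K C C'
  /-- rule 7: disjointness clash -/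
  | disjRule (C : SPL) (a₁ a₂ b₁ b₂ : ℕ) :
      SPL.atom a₁ ∈ C.conj → SPL.atom a₂ ∈ C.conj →
      SubStar K a₁ b₁ → SubStar K a₂ b₂ →
      PLAx.disj b₁ b₂ ∈ K →
      Rw K C SPL.bot
  /-- rules may be applied inside existential restrictions -/
  | exCongr (r : ℕ) (c c' : SPL) : Rw K c c' → Rw K (SPL.ex r c) (SPL.ex r c')
  /-- rules may be applied to one conjunct of an intersection -/
  | interCongr (C C' c c' : SPL) (rest : Multiset SPL) :
      Rw K c c' →
      C.conj = {c} + rest → C'.conj = {c'} + rest →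
      Rw K C C'

/-- A simple concept is normalized w.r.t. `K` when no rule is applicable. -/
def Normalized (K : Set PLAx) (C : SPL) : Prop := ¬ ∃ C', Rw K C C'

/-- All interval constraints `∃f.[l,u]` occurring (at any depth) in a simple concept. -/
def SPL.ivalsOf : SPL → List (ℕ × ℤ × ℤ)
  | .ival f l u => [(f, l, u)]
  | .ex _ c => c.ivalsOf
  | .inter c d => c.ivalsOf ++ d.ivalsOf
  | _ => []

def ivalsL (C : PLC) : List (ℕ × ℤ × ℤ) := C.flatMap SPL.ivalsOf

/-- The integers occurring as interval endpoints in a full concept. -/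
def endpointsL (D : PLC) : List ℤ := (ivalsL D).flatMap fun t => [t.2.1, t.2.2]

/-- A subsumption `C ⊑ D` is interval safe iff every interval of `C` is either
    contained in, or disjoint from, every interval of `D`. -/
def IntervalSafe (C D : PLC) : Prop :=
  ∀ p ∈ ivalsL C, ∀ q ∈ ivalsL D,
    Set.Icc p.2.1 p.2.2 ⊆ Set.Icc q.2.1 q.2.2 ∨
      Set.Icc p.2.1 p.2.2 ∩ Set.Icc q.2.1 q.2.2 = ∅

/-- Given the ascending chain `x₀ < x₁ < … < x_{r+1}` of cut points, produce the
    subinterval constraints `[xᵢ,xᵢ]`, `[xᵢ+1, xᵢ₊₁-1]`, …, `[x_{r+1},x_{r+1}]`. -/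
def chainPieces (f : ℕ) : List ℤ → List SPL
  | [] => []
  | [x] => [SPL.ival f x x]
  | x :: y :: rest =>
      SPL.ival f x x :: SPL.ival f (x + 1) (y - 1) :: chainPieces f (y :: rest)

/-- The endpoints of `D` lying in `[l,u]`, sorted in increasing order, without duplicates. -/
def cutPoints (E : List ℤ) (l u : ℤ) : List ℤ :=
  ((E.filter fun x => decide (l ≤ x ∧ x ≤ u)).toFinset).sort (· ≤ ·)

/-- Interval splitting of a single constraint `∃f.[l,u]` w.r.t. the endpoints `E`. -/
def splitIval (E : List ℤ) (f : ℕ) (l u : ℤ) : List SPL :=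
  chainPieces f (l :: (cutPoints E l u ++ [u]))

/-- Interval normalization of a simple concept w.r.t. endpoints `E`: replace each
    interval constraint by the union of its pieces and lift unions to the top level
    (distributivity of `⊓` over `⊔` and `∃R.(C₁ ⊔ C₂) ≡ ∃R.C₁ ⊔ ∃R.C₂`). -/
def SPL.splitC (E : List ℤ) : SPL → List SPL
  | .atom a => [.atom a]
  | .bot => [.bot]
  | .ival f l u => splitIval E f l u
  | .ex r c => (c.splitC E).map (SPL.ex r)
  | .inter c d => (c.splitC E).flatMap fun c' => (d.splitC E).map fun d' => SPL.inter c' d'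

/-- `split(C, D)` for full `PL` concepts. -/
def splitL (C D : PLC) : PLC := C.flatMap (SPL.splitC (endpointsL D))

/-- Size of (the encoding of) a simple concept. -/
def SPL.size : SPL → ℕ
  | .atom _ => 1
  | .bot => 1
  | .ival _ _ _ => 1
  | .ex _ c => c.size + 1
  | .inter c d => c.size + d.size + 1

/-- Size of a full concept. -/
def sizeL (C : PLC) : ℕ := (C.map SPL.size).sum + 1

/-- The structural subsumption algorithm `STS` (Algorithm 1): `STS K C D` holds
    iff the algorithm returns `true` on the elementary subsumption `C ⊑ D`. -/
inductive STS (K : Set PLAx) : SPL → SPL → Prop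
  | botCase (D : SPL) : STS K SPL.bot D
  | atomCase (C : SPL) (a a' : ℕ) :
      SPL.atom a' ∈ C.conj → SubStar K a' a → STS K C (SPL.atom a)
  | ivalCase (C : SPL) (f : ℕ) (l u l' u' : ℤ) :
      SPL.ival f l' u' ∈ C.conj → l ≤ l' → u' ≤ u → STS K C (SPL.ival f l u)
  | exCase (C C' D' : SPL) (r : ℕ) :
      SPL.ex r C' ∈ C.conj → STS K C' D' → STS K C (SPL.ex r D')
  | interCase (C D' D'' : SPL) :
      STS K C D' → STS K C D'' → STS K C (SPL.inter D' D'')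

/-- Pointwise exhaustive normalization of the disjuncts of a full concept. -/
def RwL (K : Set PLAx) (C C' : PLC) : Prop :=
  List.Forall₂ (Relation.ReflTransGen (Rw K)) C C'

/-- `PLR(K, C ⊑ D) = true` (Algorithm 2): normalize `C` exhaustively with the seven
    rules, split intervals w.r.t. `D`, and check every resulting disjunct against
    some disjunct of `D` with `STS`. -/
def PLRaccept (K : Set PLAx) (C D : PLC) : Prop :=
  ∃ C' : PLC, RwL K C C' ∧ (∀ c ∈ C', Normalized K c) ∧
    ∀ c ∈ splitL C' D, ∃ d ∈ D, STS K c d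

/-! ### Signatures -/

def SPL.rNames : SPL → Set ℕ
  | .ex r c => insert r c.rNames
  | .inter c d => c.rNames ∪ d.rNames
  | _ => ∅

def SPL.cNames : SPL → Set ℕ
  | .atom a => {a}
  | .ex _ c => c.cNames
  | .inter c d => c.cNames ∪ d.cNames
  | _ => ∅

def rNamesL (C : PLC) : Set ℕ := {n | ∃ c ∈ C, n ∈ SPL.rNames c}
def cNamesL (C : PLC) : Set ℕ := {n | ∃ c ∈ C, n ∈ SPL.cNames c}

def PLAx.rNames : PLAx → Set ℕ
  | .funcRole r => {r}
  | .rangeAx r _ => {r}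
  | _ => ∅

def PLAx.cNames : PLAx → Set ℕ
  | .rangeAx _ a => {a}
  | .incl a b => {a, b}
  | .disj a b => {a, b}
  | _ => ∅

def rNamesPL (K : Set PLAx) : Set ℕ := {n | ∃ ax ∈ K, n ∈ PLAx.rNames ax}
def cNamesPL (K : Set PLAx) : Set ℕ := {n | ∃ ax ∈ K, n ∈ PLAx.cNames ax}

/-! ### Horn-SRIQ oracles -/

/-- SRIQ roles: role names and their inverses. -/
inductive HRole : Type
  | name : ℕ → HRole
  | inv  : ℕ → HRole
  deriving DecidableEq

/-- The concepts allowed in normal-form Horn-SRIQ axioms: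
    concept names, `⊤`, `⊥`, and `∃S.Self`. -/
inductive HAtom : Type
  | name : ℕ → HAtom
  | top  : HAtom
  | bot  : HAtom
  | self : HRole → HAtom
  deriving DecidableEq

/-- Horn-SRIQ axioms in normal form (Table 2), plus role axioms. -/
inductive HAx : Type
  | sub2    : HAtom → HAtom → HAtom → HAx      -- C₁ ⊓ C₂ ⊑ D
  | subEx   : HRole → HAtom → HAtom → HAx      -- ∃R.C ⊑ D
  | subAll  : HAtom → HRole → HAtom → HAx      -- C ⊑ ∀R.D
  | subToEx : HAtom → HRole → HAtom → HAx      -- C ⊑ ∃R.D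
  | atMost1 : HAtom → HRole → HAtom → HAx      -- C ⊑ ≤1 S.D
  | atLeast : HAtom → ℕ → HRole → HAtom → HAx  -- C ⊑ ≥n S.D
  | rIncl   : List HRole → HRole → HAx         -- R₁ ∘ … ∘ Rₙ ⊑ R
  | rDisj   : HRole → HRole → HAx              -- disj(S₁, S₂)

def HRole.sem (I : Interp) : HRole → Set (I.Δ × I.Δ)
  | .name r => I.role r
  | .inv r => {p | (p.2, p.1) ∈ I.role r}

def HAtom.sem (I : Interp) : HAtom → Set I.Δ
  | .name a => I.conc a
  | .top => Set.univ
  | .bot => ∅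
  | .self s => {d | (d, d) ∈ s.sem I}

def HRole.semChain (I : Interp) : List HRole → Set (I.Δ × I.Δ)
  | [] => {p | p.1 = p.2}
  | r :: rest => {p | ∃ z, (p.1, z) ∈ r.sem I ∧ (z, p.2) ∈ HRole.semChain I rest}

def Interp.satHAx (I : Interp) : HAx → Prop
  | .sub2 c₁ c₂ d => c₁.sem I ∩ c₂.sem I ⊆ d.sem I
  | .subEx r c d => {x | ∃ y, (x, y) ∈ r.sem I ∧ y ∈ c.sem I} ⊆ d.sem I
  | .subAll c r d => ∀ ⦃x y⦄, x ∈ c.sem I → (x, y) ∈ r.sem I → y ∈ d.sem I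
  | .subToEx c r d => ∀ ⦃x⦄, x ∈ c.sem I → ∃ y, (x, y) ∈ r.sem I ∧ y ∈ d.sem I
  | .atMost1 c s d => ∀ ⦃x y z⦄, x ∈ c.sem I → (x, y) ∈ s.sem I → y ∈ d.sem I →
      (x, z) ∈ s.sem I → z ∈ d.sem I → y = z
  | .atLeast c n s d => ∀ ⦃x⦄, x ∈ c.sem I →
      ∃ t : Finset I.Δ, n ≤ t.card ∧ ∀ y ∈ t, (x, y) ∈ s.sem I ∧ y ∈ d.sem I
  | .rIncl rs r => HRole.semChain I rs ⊆ r.sem I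
  | .rDisj s₁ s₂ => s₁.sem I ∩ s₂.sem I = ∅

def Interp.satHKB (I : Interp) (O : Set HAx) : Prop := ∀ ax ∈ O, I.satHAx ax

def HRole.base : HRole → ℕ
  | .name r => r
  | .inv r => r

def HAtom.cNames : HAtom → Set ℕ
  | .name a => {a}
  | _ => ∅

def HAtom.rNames : HAtom → Set ℕ
  | .self s => {s.base}
  | _ => ∅

def HAx.cNames : HAx → Set ℕ
  | .sub2 c₁ c₂ d => c₁.cNames ∪ c₂.cNames ∪ d.cNames
  | .subEx _ c d => c.cNames ∪ d.cNames
  | .subAll c _ d => c.cNames ∪ d.cNames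
  | .subToEx c _ d => c.cNames ∪ d.cNames
  | .atMost1 c _ d => c.cNames ∪ d.cNames
  | .atLeast c _ _ d => c.cNames ∪ d.cNames
  | .rIncl _ _ => ∅
  | .rDisj _ _ => ∅

def HAx.rNames : HAx → Set ℕ
  | .sub2 c₁ c₂ d => c₁.rNames ∪ c₂.rNames ∪ d.rNames
  | .subEx r c d => insert r.base (c.rNames ∪ d.rNames)
  | .subAll c r d => insert r.base (c.rNames ∪ d.rNames)
  | .subToEx c r d => insert r.base (c.rNames ∪ d.rNames)
  | .atMost1 c s d => insert s.base (c.rNames ∪ d.rNames)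
  | .atLeast c _ s d => insert s.base (c.rNames ∪ d.rNames)
  | .rIncl rs r => insert r.base {n | ∃ s ∈ rs, n = HRole.base s}
  | .rDisj s₁ s₂ => {s₁.base, s₂.base}

def rNamesH (O : Set HAx) : Set ℕ := {n | ∃ ax ∈ O, n ∈ HAx.rNames ax}
def cNamesH (O : Set HAx) : Set ℕ := {n | ∃ ax ∈ O, n ∈ HAx.cNames ax}

/-! ### Axiom shifting, oracle queries, `pos(O_K⁺)` -/

/-- Range and functionality axioms. -/
def isRF : PLAx → Prop
  | .funcRole _ => True
  | .funcProp _ => True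
  | .rangeAx _ _ => True
  | _ => False

/-- `K_O⁻`: the range and functionality axioms of `K`. -/
def Kminus (K : Set PLAx) : Set PLAx := {ax | ax ∈ K ∧ isRF ax}

/-- `K \ K_O⁻`: the inclusion and disjointness axioms of `K`, shifted to the oracle. -/
def Kshift (K : Set PLAx) : Set PLAx := {ax | ax ∈ K ∧ ¬ isRF ax}

/-- Satisfaction of `O_K⁺ = O ∪ (K \ K_O⁻)`. -/
def satOplus (I : Interp) (K : Set PLAx) (O : Set HAx) : Prop :=
  I.satHKB O ∧ I.satKB (Kshift K)

/-- An oracle query `A₁ ⊓ … ⊓ A_m ⊑ A_{m+1} ⊔ … ⊔ Aₙ` (right-hand side `⊥` when empty). -/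
structure OQuery : Type where
  lhs : List ℕ
  rhs : List ℕ

def Interp.satQ (I : Interp) (q : OQuery) : Prop :=
  {d | ∀ a ∈ q.lhs, d ∈ I.conc a} ⊆ {d | ∃ b ∈ q.rhs, d ∈ I.conc b}

/-- The concept names of `sig(O_K⁺)`. -/
def cNamesOplus (K : Set PLAx) (O : Set HAx) : Set ℕ :=
  cNamesH O ∪ cNamesPL (Kshift K)

/-- `pos(O_K⁺)`: the oracle queries over `sig(O_K⁺) ∩ N_C` entailed by `O_K⁺`. -/
def posOplus (K : Set PLAx) (O : Set HAx) : Set OQuery :=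
  {q | (∀ a ∈ q.lhs, a ∈ cNamesOplus K O) ∧ (∀ b ∈ q.rhs, b ∈ cNamesOplus K O) ∧
     ∀ I : Interp, satOplus I K O → I.satQ q}

/-- `K ∪ O ⊨ C ⊑ D`. -/
def EntailsKO (K : Set PLAx) (O : Set HAx) (C D : PLC) : Prop :=
  ∀ I : Interp, I.satKB K → I.satHKB O → semL I C ⊆ semL I D

/-- `K_O⁻ ∪ pos(O_K⁺) ⊨ C ⊑ D`. -/
def EntailsShift (K : Set PLAx) (O : Set HAx) (C D : PLC) : Prop :=
  ∀ I : Interp, I.satKB (Kminus K) → (∀ q ∈ posOplus K O, I.satQ q) →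
    semL I C ⊆ semL I D

/-- `O_K⁺ ⊨ A₁ ⊓ … ⊓ Aₙ ⊑ ⊥`. -/
def OplusRefutes (K : Set PLAx) (O : Set HAx) (as : List ℕ) : Prop :=
  ∀ I : Interp, satOplus I K O → ∀ d : I.Δ, ¬ ∀ a ∈ as, d ∈ I.conc a

/-- One application of one of the seven oracle normalization rules (Table 4). -/
inductive RwO (K : Set PLAx) (O : Set HAx) : SPL → SPL → Prop
  /-- rule 1: `⊥ ⊓ D ⇝ ⊥` -/
  | botConj (C : SPL) :
      SPL.bot ∈ C.conj → C ≠ SPL.bot → RwO K O C SPL.bot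
  /-- rule 2 -/
  | exBot (r : ℕ) : RwO K O (SPL.ex r SPL.bot) SPL.bot
  /-- rule 3 -/
  | emptyIval (f : ℕ) (l u : ℤ) : u < l → RwO K O (SPL.ival f l u) SPL.bot
  /-- rule 4 -/
  | funcRole (C C' : SPL) (r : ℕ) (D D' : SPL) (rest : Multiset SPL) :
      PLAx.funcRole r ∈ Kminus K →
      C.conj = {SPL.ex r D, SPL.ex r D'} + rest →
      C'.conj = {SPL.ex r (SPL.inter D D')} + rest →
      RwO K O C C'
  /-- rule 5 (unconditional) -/
  | funcProp (C C' : SPL) (f : ℕ) (l₁ u₁ l₂ u₂ : ℤ) (rest : Multiset SPL) :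
      C.conj = {SPL.ival f l₁ u₁, SPL.ival f l₂ u₂} + rest →
      C'.conj = {SPL.ival f (max l₁ l₂) (min u₁ u₂)} + rest →
      RwO K O C C'
  /-- rule 6 -/
  | rangeRule (C C' : SPL) (r a : ℕ) (D : SPL) (rest : Multiset SPL) :
      PLAx.rangeAx r a ∈ Kminus K →
      SPL.atom a ∉ D.conj → SPL.bot ∉ D.conj →
      C.conj = {SPL.ex r D} + rest →
      C'.conj = {SPL.ex r (SPL.inter D (SPL.atom a))} + rest →
      RwO K O C C'
  /-- rule 7: `A₁ ⊓ … ⊓ Aₙ ⊓ D ⇝ ⊥` if `O_K⁺ ⊨ A₁ ⊓ … ⊓ Aₙ ⊑ ⊥` -/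
  | atomsBot (C : SPL) (as : List ℕ) :
      as ≠ [] → (∀ a ∈ as, SPL.atom a ∈ C.conj) → OplusRefutes K O as →
      RwO K O C SPL.bot
  /-- congruence: inside existential restrictions -/
  | exCongr (r : ℕ) (c c' : SPL) : RwO K O c c' → RwO K O (SPL.ex r c) (SPL.ex r c')
  /-- congruence: on one conjunct -/
  | interCongr (C C' c c' : SPL) (rest : Multiset SPL) :
      RwO K O c c' →
      C.conj = {c} + rest → C'.conj = {c'} + rest →
      RwO K O C C'

/-- `C` is normalized w.r.t. `K` and `O`. -/
def NormalizedO (K : Set PLAx) (O : Set HAx) (C : SPL) : Prop := ¬ ∃ C', RwO K O C C'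

/-! ### The canonical model of a normalized simple concept -/

/-- The top-level existential restrictions of a simple concept, in syntactic order. -/
def SPL.exList : SPL → List (ℕ × SPL)
  | .ex r c => [(r, c)]
  | .inter c d => c.exList ++ d.exList
  | _ => []

/-- The top-level concept names of a simple concept. -/
def SPL.atomList : SPL → List ℕ
  | .atom a => [a]
  | .inter c d => c.atomList ++ d.atomList
  | _ => []

/-- The top-level interval constraints of a simple concept. -/
def SPL.ivalList : SPL → List (ℕ × ℤ × ℤ)
  | .ival f l u => [(f, l, u)]
  | .inter c d => c.ivalList ++ d.ivalList
  | _ => []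

/-- The subconcept of `C` reached by following a path of indices into the
    nested top-level existential restrictions. -/
def subAt : List ℕ → SPL → Option SPL
  | [], C => some C
  | i :: p, C =>
    match C.exList[i]? with
    | some rc => subAt p rc.2
    | none => none

/-- The canonical model of a simple concept `C` w.r.t. `K` and `O` (Definition 18):
    its domain is the tree of nested existential restrictions of `C`. -/
def canonInterp (K : Set PLAx) (O : Set HAx) (C : SPL) : Interp where
  Δ := {p : List ℕ // (subAt p C).isSome}
  nonempty := ⟨⟨[], by simp [subAt]⟩⟩
  conc := fun a => {p | ∃ C', subAt p.1 C = some C' ∧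
    (OQuery.mk C'.atomList [a]) ∈ posOplus K O}
  role := fun r => {pq | ∃ (C' : SPL) (i : ℕ) (rc : ℕ × SPL),
    subAt pq.1.1 C = some C' ∧ C'.exList[i]? = some rc ∧ rc.1 = r ∧
    pq.2.1 = pq.1.1 ++ [i]}
  cprop := fun f => {pi | ∃ (C' : SPL) (l : ℤ),
    subAt pi.1.1 C = some C' ∧ (f, l, pi.2) ∈ C'.ivalList}

/-- The distinguished point `d` of the canonical model. -/
def canonRoot (K : Set PLAx) (O : Set HAx) (C : SPL) : (canonInterp K O C).Δ :=
  ⟨[], by simp [subAt]⟩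

/-! ### The oracle structural subsumption algorithm and `PLR^O` -/

/-- `STS^O` (Algorithm 3), with the oracle `O_K⁺`. -/
inductive STSO (K : Set PLAx) (O : Set HAx) : SPL → SPL → Prop
  | botCase (D : SPL) : STSO K O SPL.bot D
  | atomCase (C : SPL) (a : ℕ) :
      (OQuery.mk C.atomList [a]) ∈ posOplus K O → STSO K O C (SPL.atom a)
  | ivalCase (C : SPL) (f : ℕ) (l u l' u' : ℤ) :
      SPL.ival f l' u' ∈ C.conj → l ≤ l' → u' ≤ u → STSO K O C (SPL.ival f l u)
  | exCase (C C' D' : SPL) (r : ℕ) :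
      SPL.ex r C' ∈ C.conj → STSO K O C' D' → STSO K O C (SPL.ex r D')
  | interCase (C D' D'' : SPL) :
      STSO K O C D' → STSO K O C D'' → STSO K O C (SPL.inter D' D'')

def RwOL (K : Set PLAx) (O : Set HAx) (C C' : PLC) : Prop :=
  List.Forall₂ (Relation.ReflTransGen (RwO K O)) C C'

/-- `PLR^O(K, C ⊑ D) = true` (Algorithm 4). -/
def PLROaccept (K : Set PLAx) (O : Set HAx) (C D : PLC) : Prop :=
  ∃ C' : PLC, RwOL K O C C' ∧ (∀ c ∈ C', NormalizedO K O c) ∧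
    ∀ c ∈ splitL C' D, ∃ d ∈ D, STSO K O c d

/-! ### Single-atom form and oracle compilation -/

/-- Auxiliary predicate: every conjunct is a concept name, an interval constraint,
    or an existential restriction whose filler is in single-atom form. -/
def SAaux : SPL → Prop
  | .atom _ => True
  | .bot => False
  | .ival _ _ _ => True
  | .ex _ c => SAaux c ∧ c.atomList.length ≤ 1
  | .inter c d => SAaux c ∧ SAaux d

/-- A simple concept in single-atom form. -/
def SingleAtomS (C : SPL) : Prop := SAaux C ∧ C.atomList.length ≤ 1

/-- A full concept in single-atom form. -/
def SingleAtomL (C : PLC) : Prop := ∀ c ∈ C, SingleAtomS c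

/-- `comp(K, O) = K_O⁻ ∪ { A ⊑ B : (A ⊑ B) ∈ pos(O_K⁺) }`. -/
def compKB (K : Set PLAx) (O : Set HAx) : Set PLAx :=
  Kminus K ∪ {ax | ∃ a b : ℕ, ax = PLAx.incl a b ∧ (OQuery.mk [a] [b]) ∈ posOplus K O}

/-- A definition `B ≡ A₁ ⊓ … ⊓ Aₙ` (expressible in both EL and DL-lite_horn). -/
abbrev CDef := ℕ × List ℕ

def Interp.satDef (I : Interp) (df : CDef) : Prop :=
  I.conc df.1 = {d | ∀ a ∈ df.2, d ∈ I.conc a}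

/-- `K ∪ O ∪ O* ⊨ C ⊑ D`, where `O*` is a list of definitions. -/
def EntailsKODefs (K : Set PLAx) (O : Set HAx) (defs : List CDef) (C D : PLC) : Prop :=
  ∀ I : Interp, I.satKB K → I.satHKB O → (∀ df ∈ defs, I.satDef df) →
    semL I C ⊆ semL I D

def defsSize (defs : List CDef) : ℕ := (defs.map fun p => p.2.length + 1).sum

end PLPaper

namespace PLPaper
/-! ### Auxiliary material for Statement 7 -/

lemma HAtom_cNames_finite (a : HAtom) : a.cNames.Finite := by
  cases a with
  | name n => exact Set.finite_singleton n
  | top => exact Set.finite_empty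
  | bot => exact Set.finite_empty
  | self s => exact Set.finite_empty

lemma HAx_cNames_finite (ax : HAx) : ax.cNames.Finite := by
  cases ax with
  | sub2 c₁ c₂ d =>
      exact ((HAtom_cNames_finite c₁).union (HAtom_cNames_finite c₂)).union
        (HAtom_cNames_finite d)
  | subEx r c d => exact (HAtom_cNames_finite c).union (HAtom_cNames_finite d)
  | subAll c r d => exact (HAtom_cNames_finite c).union (HAtom_cNames_finite d)
  | subToEx c r d => exact (HAtom_cNames_finite c).union (HAtom_cNames_finite d)
  | atMost1 c s d => exact (HAtom_cNames_finite c).union (HAtom_cNames_finite d)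
  | atLeast c n s d => exact (HAtom_cNames_finite c).union (HAtom_cNames_finite d)
  | rIncl rs r => exact Set.finite_empty
  | rDisj s₁ s₂ => exact Set.finite_empty

lemma PLAx_cNames_finite (ax : PLAx) : ax.cNames.Finite := by
  cases ax with
  | funcRole r => exact Set.finite_empty
  | funcProp f => exact Set.finite_empty
  | rangeAx r a => exact Set.finite_singleton a
  | incl a b => exact (Set.finite_singleton b).insert a
  | disj a b => exact (Set.finite_singleton b).insert a

lemma cNamesOplus_finite {K : Set PLAx} {O : Set HAx} (hK : K.Finite) (hO : O.Finite) :
    (cNamesOplus K O).Finite := by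
  have h1 : (cNamesH O).Finite := by
    refine Set.Finite.subset (Set.Finite.biUnion hO fun ax _ => HAx_cNames_finite ax) ?_
    rintro n ⟨ax, haxO, hn⟩
    exact Set.mem_biUnion haxO hn
  have h2 : (cNamesPL (Kshift K)).Finite := by
    refine Set.Finite.subset
      (Set.Finite.biUnion (hK.subset fun ax h => (h : ax ∈ K ∧ ¬ isRF ax).1) fun ax _ => PLAx_cNames_finite ax) ?_
    rintro n ⟨ax, haxO, hn⟩
    exact Set.mem_biUnion haxO hn
  exact h1.union h2

section Glue

variable (I : Interp) (Jm : I.Δ → Interp) (em : ∀ d, (Jm d).Δ) (SC SR : Set ℕ)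

/-- Disjoint amalgamation of `I` with the family of oracle models `Jm d`,
    identifying `d` with `em d`. -/
def glue : Interp where
  Δ := Σ d : I.Δ, (Jm d).Δ
  nonempty := ⟨⟨Classical.choice I.nonempty, em _⟩⟩
  conc A := {p | (A ∈ SC ∧ p.2 ∈ (Jm p.1).conc A) ∨
      (A ∉ SC ∧ p.2 = em p.1 ∧ p.1 ∈ I.conc A)}
  role r := {pq | (r ∈ SR ∧ ∃ d x y, (x, y) ∈ (Jm d).role r ∧ pq.1 = ⟨d, x⟩ ∧ pq.2 = ⟨d, y⟩) ∨
      (r ∉ SR ∧ ∃ d d', (d, d') ∈ I.role r ∧ pq.1 = ⟨d, em d⟩ ∧ pq.2 = ⟨d', em d'⟩)}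
  cprop f := {pi | pi.1.2 = em pi.1.1 ∧ (pi.1.1, pi.2) ∈ I.cprop f}

variable {I Jm em SC SR}

lemma glue_role_src {r : ℕ} (hr : r ∈ SR) {d : I.Δ} {x : (Jm d).Δ}
    {q : (glue I Jm em SC SR).Δ} :
    ((⟨d, x⟩, q) ∈ (glue I Jm em SC SR).role r) ↔
      ∃ y, (x, y) ∈ (Jm d).role r ∧ q = ⟨d, y⟩ := by
  constructor
  · rintro (⟨_, d₀, x₀, y₀, hxy, h1, h2⟩ | ⟨hr', _⟩)
    · obtain rfl : d = d₀ := congrArg Sigma.fst h1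
      obtain rfl : x = x₀ := @sigma_mk_injective _ (fun d => (Jm d).Δ) d _ _ h1
      exact ⟨y₀, hxy, h2⟩
    · exact absurd hr hr'
  · rintro ⟨y, hxy, rfl⟩
    exact Or.inl ⟨hr, d, x, y, hxy, rfl, rfl⟩

lemma glue_role_tgt {r : ℕ} (hr : r ∈ SR) {d : I.Δ} {y : (Jm d).Δ}
    {q : (glue I Jm em SC SR).Δ} :
    ((q, ⟨d, y⟩) ∈ (glue I Jm em SC SR).role r) ↔
      ∃ x, (x, y) ∈ (Jm d).role r ∧ q = ⟨d, x⟩ := by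
  constructor
  · rintro (⟨_, d₀, x₀, y₀, hxy, h1, h2⟩ | ⟨hr', _⟩)
    · obtain rfl : d = d₀ := congrArg Sigma.fst h2
      obtain rfl : y = y₀ := @sigma_mk_injective _ (fun d => (Jm d).Δ) d _ _ h2
      exact ⟨x₀, hxy, h1⟩
    · exact absurd hr hr'
  · rintro ⟨x, hxy, rfl⟩
    exact Or.inl ⟨hr, d, x, y, hxy, rfl, rfl⟩

lemma glue_hrole_src {s : HRole} (hs : s.base ∈ SR) {d : I.Δ} {x : (Jm d).Δ}
    {q : (glue I Jm em SC SR).Δ} :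
    ((⟨d, x⟩, q) ∈ s.sem (glue I Jm em SC SR)) ↔
      ∃ y, (x, y) ∈ s.sem (Jm d) ∧ q = ⟨d, y⟩ := by
  cases s with
  | name r => exact glue_role_src hs
  | inv r =>
      show ((q, ⟨d, x⟩) ∈ (glue I Jm em SC SR).role r) ↔ _
      rw [glue_role_tgt (r := r) hs]
      rfl

lemma glue_chain_src {rs : List HRole} (hs : ∀ s ∈ rs, s.base ∈ SR) {d : I.Δ}
    {x : (Jm d).Δ} {q : (glue I Jm em SC SR).Δ} :
    ((⟨d, x⟩, q) ∈ HRole.semChain (glue I Jm em SC SR) rs) ↔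
      ∃ y, (x, y) ∈ HRole.semChain (Jm d) rs ∧ q = ⟨d, y⟩ := by
  induction rs generalizing x with
  | nil =>
      constructor
      · intro h
        exact ⟨x, rfl, h.symm⟩
      · rintro ⟨y, hxy, rfl⟩
        exact congrArg (Sigma.mk d) hxy
  | cons s rs ih =>
      constructor
      · rintro ⟨z, h1, h2⟩
        obtain ⟨y, hxy, rfl⟩ := (glue_hrole_src (hs s List.mem_cons_self)).mp h1
        obtain ⟨w, hyw, rfl⟩ := (ih fun s' hs' => hs s' (List.mem_cons_of_mem _ hs')).mp h2
        exact ⟨w, ⟨y, hxy, hyw⟩, rfl⟩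
      · rintro ⟨w, ⟨y, hxy, hyw⟩, rfl⟩
        exact ⟨⟨d, y⟩, (glue_hrole_src (hs s List.mem_cons_self)).mpr ⟨y, hxy, rfl⟩,
          (ih fun s' hs' => hs s' (List.mem_cons_of_mem _ hs')).mpr ⟨w, hyw, rfl⟩⟩

lemma glue_hatom {a : HAtom} (hc : a.cNames ⊆ SC) (hr : a.rNames ⊆ SR)
    {d : I.Δ} {x : (Jm d).Δ} :
    ((⟨d, x⟩ : (glue I Jm em SC SR).Δ) ∈ a.sem (glue I Jm em SC SR)) ↔
      x ∈ a.sem (Jm d) := by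
  cases a with
  | name n =>
      have hn : n ∈ SC := hc rfl
      constructor
      · rintro (⟨_, h⟩ | ⟨hn', _⟩)
        · exact h
        · exact absurd hn hn'
      · intro h
        exact Or.inl ⟨hn, h⟩
  | top => exact iff_of_true trivial trivial
  | bot => exact iff_of_false (fun h => h) (fun h => h)
  | self s =>
      have hs : s.base ∈ SR := hr rfl
      show (((⟨d, x⟩ : (glue I Jm em SC SR).Δ), (⟨d, x⟩ : (glue I Jm em SC SR).Δ)) ∈
        s.sem (glue I Jm em SC SR)) ↔ _
      refine (glue_hrole_src hs).trans ?_
      constructor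
      · rintro ⟨y, hxy, hy⟩
        obtain rfl : x = y := @sigma_mk_injective _ (fun d => (Jm d).Δ) d _ _ hy
        exact hxy
      · intro h
        exact ⟨x, h, rfl⟩

end Glue
section Glue2

variable {I : Interp} {Jm : I.Δ → Interp} {em : ∀ d, (Jm d).Δ} {SC SR : Set ℕ}

/-- A glued interpretation satisfies every Horn-SRIQ axiom, over signature
    `(SC, SR)`, that all components satisfy. -/
lemma glue_satHAx {ax : HAx} (hax : ∀ d, (Jm d).satHAx ax)
    (hc : ax.cNames ⊆ SC) (hr : ax.rNames ⊆ SR) :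
    (glue I Jm em SC SR).satHAx ax := by
  cases ax with
  | sub2 c₁ c₂ e =>
      rintro ⟨d, x⟩ ⟨h1, h2⟩
      have hc1 : c₁.cNames ⊆ SC := fun n hn => hc (Or.inl (Or.inl hn))
      have hc2 : c₂.cNames ⊆ SC := fun n hn => hc (Or.inl (Or.inr hn))
      have hce : e.cNames ⊆ SC := fun n hn => hc (Or.inr hn)
      have hr1 : c₁.rNames ⊆ SR := fun n hn => hr (Or.inl (Or.inl hn))
      have hr2 : c₂.rNames ⊆ SR := fun n hn => hr (Or.inl (Or.inr hn))
      have hre : e.rNames ⊆ SR := fun n hn => hr (Or.inr hn)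
      exact (glue_hatom hce hre).mpr
        (hax d ⟨(glue_hatom hc1 hr1).mp h1, (glue_hatom hc2 hr2).mp h2⟩)
  | subEx r c e =>
      rintro ⟨d, x⟩ ⟨y, hry, hyc⟩
      have hcc : c.cNames ⊆ SC := fun n hn => hc (Or.inl hn)
      have hce : e.cNames ⊆ SC := fun n hn => hc (Or.inr hn)
      have hrr : r.base ∈ SR := hr (Set.mem_insert _ _)
      have hrc : c.rNames ⊆ SR := fun n hn => hr (Set.mem_insert_of_mem _ (Or.inl hn))
      have hre : e.rNames ⊆ SR := fun n hn => hr (Set.mem_insert_of_mem _ (Or.inr hn))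
      obtain ⟨y', hxy', rfl⟩ := (glue_hrole_src hrr).mp hry
      exact (glue_hatom hce hre).mpr (hax d ⟨y', hxy', (glue_hatom hcc hrc).mp hyc⟩)
  | subAll c r e =>
      intro p q hp hpq
      obtain ⟨d, x⟩ := p
      have hcc : c.cNames ⊆ SC := fun n hn => hc (Or.inl hn)
      have hce : e.cNames ⊆ SC := fun n hn => hc (Or.inr hn)
      have hrr : r.base ∈ SR := hr (Set.mem_insert _ _)
      have hrc : c.rNames ⊆ SR := fun n hn => hr (Set.mem_insert_of_mem _ (Or.inl hn))
      have hre : e.rNames ⊆ SR := fun n hn => hr (Set.mem_insert_of_mem _ (Or.inr hn))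
      obtain ⟨y, hxy, rfl⟩ := (glue_hrole_src hrr).mp hpq
      exact (glue_hatom hce hre).mpr (hax d ((glue_hatom hcc hrc).mp hp) hxy)
  | subToEx c r e =>
      intro p hp
      obtain ⟨d, x⟩ := p
      have hcc : c.cNames ⊆ SC := fun n hn => hc (Or.inl hn)
      have hce : e.cNames ⊆ SC := fun n hn => hc (Or.inr hn)
      have hrr : r.base ∈ SR := hr (Set.mem_insert _ _)
      have hrc : c.rNames ⊆ SR := fun n hn => hr (Set.mem_insert_of_mem _ (Or.inl hn))
      have hre : e.rNames ⊆ SR := fun n hn => hr (Set.mem_insert_of_mem _ (Or.inr hn))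
      obtain ⟨y, hxy, hy⟩ := hax d ((glue_hatom hcc hrc).mp hp)
      exact ⟨⟨d, y⟩, (glue_hrole_src hrr).mpr ⟨y, hxy, rfl⟩, (glue_hatom hce hre).mpr hy⟩
  | atMost1 c s e =>
      intro p q q' hp hpq hq hpq' hq'
      obtain ⟨d, x⟩ := p
      have hcc : c.cNames ⊆ SC := fun n hn => hc (Or.inl hn)
      have hce : e.cNames ⊆ SC := fun n hn => hc (Or.inr hn)
      have hrr : s.base ∈ SR := hr (Set.mem_insert _ _)
      have hrc : c.rNames ⊆ SR := fun n hn => hr (Set.mem_insert_of_mem _ (Or.inl hn))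
      have hre : e.rNames ⊆ SR := fun n hn => hr (Set.mem_insert_of_mem _ (Or.inr hn))
      obtain ⟨y, hxy, rfl⟩ := (glue_hrole_src hrr).mp hpq
      obtain ⟨y', hxy', rfl⟩ := (glue_hrole_src hrr).mp hpq'
      have := hax d ((glue_hatom hcc hrc).mp hp) hxy ((glue_hatom hce hre).mp hq)
        hxy' ((glue_hatom hce hre).mp hq')
      exact congrArg (Sigma.mk d) this
  | atLeast c n s e =>
      intro p hp
      obtain ⟨d, x⟩ := p
      have hcc : c.cNames ⊆ SC := fun n hn => hc (Or.inl hn)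
      have hce : e.cNames ⊆ SC := fun n hn => hc (Or.inr hn)
      have hrr : s.base ∈ SR := hr (Set.mem_insert _ _)
      have hrc : c.rNames ⊆ SR := fun n hn => hr (Set.mem_insert_of_mem _ (Or.inl hn))
      have hre : e.rNames ⊆ SR := fun n hn => hr (Set.mem_insert_of_mem _ (Or.inr hn))
      obtain ⟨t, htc, ht⟩ := hax d ((glue_hatom hcc hrc).mp hp)
      refine ⟨t.map ⟨Sigma.mk d, sigma_mk_injective⟩, by simpa using htc, ?_⟩
      intro q hq
      obtain ⟨y, hy, rfl⟩ := Finset.mem_map.mp hq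
      obtain ⟨h1, h2⟩ := ht y hy
      exact ⟨(glue_hrole_src hrr).mpr ⟨y, h1, rfl⟩, (glue_hatom hce hre).mpr h2⟩
  | rIncl rs r =>
      rintro ⟨p, q⟩ hpq
      obtain ⟨d, x⟩ := p
      have hrr : r.base ∈ SR := hr (Set.mem_insert _ _)
      have hrs : ∀ s ∈ rs, s.base ∈ SR := fun s hs =>
        hr (Set.mem_insert_of_mem _ ⟨s, hs, rfl⟩)
      obtain ⟨y, hxy, rfl⟩ := (glue_chain_src hrs).mp hpq
      exact (glue_hrole_src hrr).mpr ⟨y, hax d hxy, rfl⟩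
  | rDisj s₁ s₂ =>
      show HRole.sem (glue I Jm em SC SR) s₁ ∩ HRole.sem (glue I Jm em SC SR) s₂ = ∅
      rw [Set.eq_empty_iff_forall_notMem]
      rintro ⟨p, q⟩ ⟨h1, h2⟩
      obtain ⟨d, x⟩ := p
      have hr1 : s₁.base ∈ SR := hr (Set.mem_insert _ _)
      have hr2 : s₂.base ∈ SR := hr (Set.mem_insert_of_mem _ rfl)
      obtain ⟨y, hxy, rfl⟩ := (glue_hrole_src hr1).mp h1
      obtain ⟨y', hxy', hy'⟩ := (glue_hrole_src hr2).mp h2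
      obtain rfl : y = y' := @sigma_mk_injective _ (fun d => (Jm d).Δ) d _ _ hy'
      have he : HRole.sem (Jm d) s₁ ∩ HRole.sem (Jm d) s₂ = ∅ := hax d
      exact absurd (Set.mem_inter hxy hxy') (by rw [he]; exact not_false_iff.mpr trivial)

lemma glue_funcRole {r : ℕ} (hr : r ∉ SR) (hI : I.satAx (.funcRole r)) :
    (glue I Jm em SC SR).satAx (.funcRole r) := by
  rintro p q q' (⟨hr', _⟩ | ⟨_, d, d', hdd, hp, hq⟩) h2
  · exact absurd hr' hr
  rcases h2 with ⟨hr', _⟩ | ⟨_, d₂, d₂', hdd₂, hp₂, hq₂⟩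
  · exact absurd hr' hr
  obtain rfl : d = d₂ := congrArg Sigma.fst (hp ▸ hp₂ ▸ rfl : (⟨d, em d⟩ : Σ d, (Jm d).Δ) = ⟨d₂, em d₂⟩)
  obtain rfl : d' = d₂' := hI hdd hdd₂
  exact hq.trans hq₂.symm

lemma glue_funcProp {f : ℕ} (hI : I.satAx (.funcProp f)) :
    (glue I Jm em SC SR).satAx (.funcProp f) := by
  rintro p i j ⟨_, h1⟩ ⟨_, h2⟩
  exact hI h1 h2

lemma glue_rangeAx {r a : ℕ} (hr : r ∉ SR) (hI : I.satAx (.rangeAx r a))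
    (htype : ∀ d A, A ∈ SC → (em d ∈ (Jm d).conc A ↔ d ∈ I.conc A)) :
    (glue I Jm em SC SR).satAx (.rangeAx r a) := by
  rintro p q (⟨hr', _⟩ | ⟨_, d, d', hdd, hp, hq⟩)
  · exact absurd hr' hr
  have hd' : d' ∈ I.conc a := hI hdd
  subst hq
  by_cases hA : a ∈ SC
  · exact Or.inl ⟨hA, (htype d' a hA).mpr hd'⟩
  · exact Or.inr ⟨hA, rfl, hd'⟩

lemma glue_incl {a b : ℕ} (ha : a ∈ SC) (hb : b ∈ SC)
    (h : ∀ d, (Jm d).satAx (.incl a b)) :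
    (glue I Jm em SC SR).satAx (.incl a b) := by
  rintro p (⟨_, hp⟩ | ⟨ha', _⟩)
  · exact Or.inl ⟨hb, h p.1 hp⟩
  · exact absurd ha ha'

lemma glue_disj {a b : ℕ} (ha : a ∈ SC) (hb : b ∈ SC)
    (h : ∀ d, (Jm d).satAx (.disj a b)) :
    (glue I Jm em SC SR).satAx (.disj a b) := by
  show (glue I Jm em SC SR).conc a ∩ (glue I Jm em SC SR).conc b = ∅
  rw [Set.eq_empty_iff_forall_notMem]
  rintro p ⟨h1, h2⟩
  rcases h1 with ⟨_, h1⟩ | ⟨ha', _⟩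
  · rcases h2 with ⟨_, h2⟩ | ⟨hb', _⟩
    · have := h p.1
      rw [Interp.satAx, Set.eq_empty_iff_forall_notMem] at this
      exact this p.2 ⟨h1, h2⟩
    · exact hb' hb
  · exact ha' ha

/-- Membership of the distinguished points `⟨d, em d⟩` in a simple `PL` concept
    transfers between `I` and the glued interpretation. -/
lemma glue_spl_sem
    (htype : ∀ d A, A ∈ SC → (em d ∈ (Jm d).conc A ↔ d ∈ I.conc A))
    (c : SPL) (hrn : ∀ r ∈ c.rNames, r ∉ SR) (d : I.Δ) :
    ((⟨d, em d⟩ : (glue I Jm em SC SR).Δ) ∈ c.sem (glue I Jm em SC SR)) ↔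
      d ∈ c.sem I := by
  induction c generalizing d with
  | atom a =>
      constructor
      · rintro (⟨hA, h⟩ | ⟨_, _, h⟩)
        · exact (htype d a hA).mp h
        · exact h
      · intro h
        by_cases hA : a ∈ SC
        · exact Or.inl ⟨hA, (htype d a hA).mpr h⟩
        · exact Or.inr ⟨hA, rfl, h⟩
  | bot => exact iff_of_false (fun h => h) (fun h => h)
  | ival f l u =>
      constructor
      · rintro ⟨i, h1, h2, _, h3⟩
        exact ⟨i, h1, h2, h3⟩
      · rintro ⟨i, h1, h2, h3⟩
        exact ⟨i, h1, h2, rfl, h3⟩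
  | ex r c ih =>
      have hrS : r ∉ SR := hrn r (Set.mem_insert _ _)
      have hrn' : ∀ r' ∈ c.rNames, r' ∉ SR := fun r' h => hrn r' (Set.mem_insert_of_mem _ h)
      constructor
      · rintro ⟨q, (⟨hr', _⟩ | ⟨_, d₀, d', hdd, hp, hq⟩), hqc⟩
        · exact absurd hr' hrS
        · obtain rfl : d = d₀ := congrArg Sigma.fst hp
          subst hq
          exact ⟨d', hdd, (ih hrn' d').mp hqc⟩
      · rintro ⟨d', hdd, hc'⟩
        exact ⟨⟨d', em d'⟩, Or.inr ⟨hrS, d, d', hdd, rfl, rfl⟩, (ih hrn' d').mpr hc'⟩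
  | inter c₁ c₂ ih1 ih2 =>
      have h1 : ∀ r ∈ c₁.rNames, r ∉ SR := fun r h => hrn r (Or.inl h)
      have h2 : ∀ r ∈ c₂.rNames, r ∉ SR := fun r h => hrn r (Or.inr h)
      exact and_congr (ih1 h1 d) (ih2 h2 d)

end Glue2


/-- for every PL subsumption instance with oracle `(K, O, C ⊑ D)`
    (K a PL KB, O a Horn-SRIQ KB, sharing only concept names with `K` and the query),
    `K ∪ O ⊨ C ⊑ D` iff `K_O⁻ ∪ pos(O_K⁺) ⊨ C ⊑ D`. -/
theorem statement_7 (K : Set PLAx) (O : Set HAx) (C D : PLC)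
    (hK : K.Finite) (hO : O.Finite) (hC : C ≠ []) (hD : D ≠ [])
    (hsig : (rNamesPL K ∪ rNamesL C ∪ rNamesL D) ∩ rNamesH O = ∅) :
    EntailsKO K O C D ↔ EntailsShift K O C D := by
  constructor
  · -- forward direction: glue a countermodel of the shifted entailment with
    -- oracle models realizing the type of each of its elements
    intro h I hm hpos
    classical
    have hfin : (cNamesOplus K O).Finite := cNamesOplus_finite hK hO
    have hdisj : ∀ r, r ∈ rNamesPL K ∪ rNamesL C ∪ rNamesL D → r ∉ rNamesH O := by
      intro r h1 h2
      exact Set.eq_empty_iff_forall_notMem.mp hsig r ⟨h1, h2⟩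
    have key : ∀ d : I.Δ, ∃ (J : Interp) (e : J.Δ), satOplus J K O ∧
        ∀ A ∈ cNamesOplus K O, (e ∈ J.conc A ↔ d ∈ I.conc A) := by
      intro d
      set S : Finset ℕ := hfin.toFinset with hS
      set Tl : List ℕ := (S.filter fun A => d ∈ I.conc A).toList with hTl
      set Fl : List ℕ := (S.filter fun A => d ∉ I.conc A).toList with hFl
      have hT : ∀ a, a ∈ Tl ↔ a ∈ cNamesOplus K O ∧ d ∈ I.conc a := by
        intro a
        simp [hTl, hS, Finset.mem_toList, Finset.mem_filter, Set.Finite.mem_toFinset]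
      have hF : ∀ a, a ∈ Fl ↔ a ∈ cNamesOplus K O ∧ d ∉ I.conc a := by
        intro a
        simp [hFl, hS, Finset.mem_toList, Finset.mem_filter, Set.Finite.mem_toFinset]
      have hq : OQuery.mk Tl Fl ∉ posOplus K O := by
        intro hmem
        have hsq := hpos _ hmem
        have hd : d ∈ {x | ∀ a ∈ (OQuery.mk Tl Fl).lhs, x ∈ I.conc a} :=
          fun a ha => ((hT a).mp ha).2
        obtain ⟨b, hb, hdb⟩ := hsq hd
        exact ((hF b).mp hb).2 hdb
      have h3 : ¬ ∀ I' : Interp, satOplus I' K O → I'.satQ (OQuery.mk Tl Fl) := by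
        intro h3
        exact hq ⟨fun a ha => ((hT a).mp ha).1, fun b hb => ((hF b).mp hb).1, h3⟩
      push_neg at h3
      obtain ⟨J, hJ, hJq⟩ := h3
      obtain ⟨e, he1, he2⟩ := Set.not_subset.mp hJq
      refine ⟨J, e, hJ, fun A hA => ?_⟩
      by_cases hdA : d ∈ I.conc A
      · exact ⟨fun _ => hdA, fun _ => he1 A ((hT A).mpr ⟨hA, hdA⟩)⟩
      · exact ⟨fun heA => absurd ⟨A, (hF A).mpr ⟨hA, hdA⟩, heA⟩ he2,
          fun hcon => absurd hcon hdA⟩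
    choose Jm em hsat htype using key
    have htype' : ∀ d A, A ∈ cNamesOplus K O → (em d ∈ (Jm d).conc A ↔ d ∈ I.conc A) :=
      htype
    set G := glue I Jm em (cNamesOplus K O) (rNamesH O) with hG
    have hGK : G.satKB K := by
      intro ax hax
      cases ax with
      | funcRole r =>
          refine glue_funcRole ?_ (hm _ ⟨hax, trivial⟩)
          exact hdisj r (Or.inl (Or.inl ⟨_, hax, rfl⟩))
      | funcProp f => exact glue_funcProp (hm _ ⟨hax, trivial⟩)
      | rangeAx r a =>
          refine glue_rangeAx ?_ (hm _ ⟨hax, trivial⟩) htype'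
          exact hdisj r (Or.inl (Or.inl ⟨_, hax, rfl⟩))
      | incl a b =>
          have hsh : PLAx.incl a b ∈ Kshift K := ⟨hax, fun hco => hco⟩
          refine glue_incl ?_ ?_ (fun d => (hsat d).2 _ hsh)
          · exact Or.inr ⟨_, hsh, Or.inl rfl⟩
          · exact Or.inr ⟨_, hsh, Or.inr rfl⟩
      | disj a b =>
          have hsh : PLAx.disj a b ∈ Kshift K := ⟨hax, fun hco => hco⟩
          refine glue_disj ?_ ?_ (fun d => (hsat d).2 _ hsh)
          · exact Or.inr ⟨_, hsh, Or.inl rfl⟩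
          · exact Or.inr ⟨_, hsh, Or.inr rfl⟩
    have hGO : G.satHKB O := by
      intro ax hax
      refine glue_satHAx (fun d => (hsat d).1 ax hax) ?_ ?_
      · exact fun n hn => Or.inl ⟨ax, hax, hn⟩
      · exact fun n hn => ⟨ax, hax, hn⟩
    intro d hd
    obtain ⟨c, hcC, hdc⟩ := hd
    have hrnC : ∀ r ∈ c.rNames, r ∉ rNamesH O :=
      fun r hrc => hdisj r (Or.inl (Or.inr ⟨c, hcC, hrc⟩))
    have hmem : (⟨d, em d⟩ : G.Δ) ∈ semL G C :=
      ⟨c, hcC, (glue_spl_sem htype' c hrnC d).mpr hdc⟩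
    obtain ⟨c', hc'D, hmc'⟩ := h G hGK hGO hmem
    have hrnD : ∀ r ∈ c'.rNames, r ∉ rNamesH O :=
      fun r hrc => hdisj r (Or.inr ⟨c', hc'D, hrc⟩)
    exact ⟨c', hc'D, (glue_spl_sem htype' c' hrnD d).mp hmc'⟩
  · -- backward direction
    intro h I hKI hOI
    exact h I (fun ax hax => hKI ax hax.1)
      (fun q hq => hq.2.2 I ⟨hOI, fun ax hax => hKI ax hax.1⟩)

end PLPaper
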